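/- Let ℓ be a prime and ℤ_ℓ the ring of ℓ-adic integers. In the polynomial ring ℤ_ℓ[λ₁, λ₂, t], set r₁ = 20λ₁λ₂ + (t² − λ₁t − 44λ₂)(t − 2λ₁), r₂ = 24λ₁² − 48λ₂ + (12t − 48λ₁)(t − 2λ₁), r₃ = 60(λ₁² − 4λ₂)(t − 3λ₁)(t − 2λ₁), and let Q = ℤ_ℓ[λ₁, λ₂, t]/(r₁, r₂, r₃). Then the kernel of multiplication by (the image of) t − 2λ₁ on Q is the ideal of Q generated by the images of the two elements 60(λ₁² − 4λ₂)(t − 3λ₁) and 5λ₁λ₂·(12t − 48λ₁) − (6λ₁² − 12λ₂)·(t² − λ₁t − 44λ₂). -/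

import Mathlib

open MvPolynomial

section Aux

variable {ℓ : ℕ} [Fact (Nat.Prime ℓ)]

local notation "R" => MvPolynomial (Fin 3) ℤ_[ℓ]

private lemma stmt12.primeX0 (n : ℕ) (A : Type*) [CommRing A] [IsDomain A] :
    Prime (X 0 : MvPolynomial (Fin (n+1)) A) := by
  rw [← MulEquiv.prime_iff (MvPolynomial.finSuccEquiv A n).toMulEquiv]
  have : (MvPolynomial.finSuccEquiv A n).toMulEquiv (X 0) = Polynomial.X := by
    simp [MvPolynomial.finSuccEquiv_X_zero]
  rw [this]
  exact Polynomial.prime_X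

private lemma stmt12.primeX1 : Prime (X 1 : R) := by
  have h := stmt12.primeX0 2 ℤ_[ℓ]
  rw [← MulEquiv.prime_iff (MvPolynomial.renameEquiv ℤ_[ℓ] (Equiv.swap (0:Fin 3) 1)).toMulEquiv] at h
  simpa using h

private lemma stmt12.unit_five (h : ℓ ≠ 5) : IsUnit (5 : ℤ_[ℓ]) := by
  by_contra hu
  have hmem : (5 : ℤ_[ℓ]) ∈ IsLocalRing.maximalIdeal ℤ_[ℓ] := hu
  rw [PadicInt.maximalIdeal_eq_span_p, Ideal.mem_span_singleton] at hmem
  obtain ⟨c, hc⟩ := hmem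
  have h2 : (PadicInt.toZMod (5 : ℤ_[ℓ]) : ZMod ℓ) = 0 := by
    rw [hc, map_mul, map_natCast, ZMod.natCast_self, zero_mul]
  rw [map_ofNat] at h2
  have h3 : ((5:ℕ) : ZMod ℓ) = 0 := by exact_mod_cast h2
  have h4 := (ZMod.natCast_eq_zero_iff 5 ℓ).mp h3
  exact h ((Nat.prime_dvd_prime_iff_eq (Fact.out) (by norm_num)).mp h4)

private lemma stmt12.prime_five (h : ℓ = 5) : Prime (5 : ℤ_[ℓ]) := by
  subst h
  have h5 : ((5:ℕ) : ℤ_[5]) = (5 : ℤ_[5]) := by norm_num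
  have hsp := PadicInt.maximalIdeal_eq_span_p (p := 5)
  have hmax : (Ideal.span {(5 : ℤ_[5])}).IsPrime := by
    rw [← h5, ← hsp]
    exact (IsLocalRing.maximalIdeal.isMaximal _).isPrime
  exact (Ideal.span_singleton_prime (by norm_num)).mp hmax

private lemma stmt12.not_dvd_of_eval (p q : R) (v : Fin 3 → ℤ_[ℓ]) (h0 : eval v p = 0)
    (hq : eval v q ≠ 0) : ¬ p ∣ q := by
  rintro ⟨c, rfl⟩
  rw [map_mul, h0, zero_mul] at hq
  exact hq rfl

/-- The syzygy lemma: the syzygies of `(20·λ₁λ₂, 24·(λ₁² − 2λ₂))` are generated by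
`(6(λ₁² − 2λ₂), −5λ₁λ₂)`. -/
private lemma stmt12.syz (A B : R)
    (hAB : 20 * X 0 * X 1 * A + 24 * (X 0 ^ 2 - 2 * X 1) * B = 0) :
    ∃ h : R, A = 6 * (X 0 ^ 2 - 2 * X 1) * h ∧ B = -(5 * X 0 * X 1 * h) := by
  have heq : (5:R) * X 0 * X 1 * A = -(6 * (X 0 ^ 2 - 2 * X 1) * B) := by
    have h4 : (4:R) * (5 * X 0 * X 1 * A) = 4 * (-(6 * (X 0 ^ 2 - 2 * X 1) * B)) := by
      linear_combination hAB
    exact mul_left_cancel₀ (by norm_num : (4:R) ≠ 0) h4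
  have hd0 : (X 0 : R) ∣ (12 * X 1) * B := by
    refine ⟨6 * X 0 * B + 5 * X 1 * A, ?_⟩
    linear_combination -heq
  have hx0B : (X 0 : R) ∣ B := by
    rcases (stmt12.primeX0 2 ℤ_[ℓ]).2.2 _ _ hd0 with h | h
    · exact absurd h (stmt12.not_dvd_of_eval _ _ ![0,1,1] (by simp) (by simp))
    · exact h
  obtain ⟨B0, rfl⟩ := hx0B
  have heq0 : (5:R) * X 1 * A = -(6 * (X 0 ^ 2 - 2 * X 1) * B0) := by
    have hX : (X 0 : R) * ((5:R) * X 1 * A) = X 0 * (-(6 * (X 0 ^ 2 - 2 * X 1) * B0)) := by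
      linear_combination heq
    exact mul_left_cancel₀ (MvPolynomial.X_ne_zero 0) hX
  have hd1 : (X 1 : R) ∣ (6 * X 0 ^ 2) * B0 := by
    refine ⟨12 * B0 - 5 * A, ?_⟩
    linear_combination heq0
  have hx1B : (X 1 : R) ∣ B0 := by
    rcases stmt12.primeX1.2.2 _ _ hd1 with h | h
    · exact absurd h (stmt12.not_dvd_of_eval _ _ ![1,0,1] (by simp) (by simp))
    · exact h
  obtain ⟨B1, rfl⟩ := hx1B
  have heq1 : (5:R) * A = -(6 * (X 0 ^ 2 - 2 * X 1) * B1) := by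
    have hX : (X 0 : R) * (X 1 * ((5:R) * A))
        = X 0 * (X 1 * (-(6 * (X 0 ^ 2 - 2 * X 1) * B1))) := by
      linear_combination X 0 * heq0
    exact mul_left_cancel₀ (MvPolynomial.X_ne_zero 1)
      (mul_left_cancel₀ (MvPolynomial.X_ne_zero 0) hX)
  have hfive : ∃ B2 : R, B1 = 5 * B2 := by
    by_cases hl : ℓ = 5
    · have hp : Prime ((5:R)) := by
        have hC : Prime (C (5:ℤ_[ℓ]) : R) :=
          (MvPolynomial.prime_C_iff (Fin 3)).mpr (stmt12.prime_five hl)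
        rwa [show (C (5:ℤ_[ℓ]) : R) = 5 by
          rw [show (5:ℤ_[ℓ]) = ((5:ℕ):ℤ_[ℓ]) by norm_num, map_natCast]; norm_num] at hC
      have hdvd : (5:R) ∣ (6 * (X 0 ^ 2 - 2 * X 1)) * B1 := by
        refine ⟨-A, ?_⟩
        linear_combination heq1
      rcases hp.2.2 _ _ hdvd with h | h
      · exfalso
        have h6 : (5:ℤ_[ℓ]) ∣ 6 := by
          have := map_dvd (eval (![1,0,0] : Fin 3 → ℤ_[ℓ])) h
          simpa using this
        have h1 : (5:ℤ_[ℓ]) ∣ 1 := by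
          have := dvd_sub h6 (dvd_refl (5:ℤ_[ℓ]))
          norm_num at this
          exact this
        exact (stmt12.prime_five hl).2.1 (isUnit_of_dvd_one h1)
      · exact h
    · obtain ⟨u, hu⟩ := (stmt12.unit_five hl).map (C : ℤ_[ℓ] →+* R)
      have hu5 : (u : R) = 5 := by
        rw [hu, show (5:ℤ_[ℓ]) = ((5:ℕ):ℤ_[ℓ]) by norm_num, map_natCast]; norm_num
      exact ⟨(u⁻¹ : (MvPolynomial (Fin 3) ℤ_[ℓ])ˣ) * B1,
        by rw [← hu5, ← mul_assoc, Units.mul_inv, one_mul]⟩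
  obtain ⟨B2, rfl⟩ := hfive
  refine ⟨-B2, ?_, ?_⟩
  · have h5 : (5:R) * A = 5 * (6 * (X 0 ^ 2 - 2 * X 1) * -B2) := by
      linear_combination heq1
    exact mul_left_cancel₀ (by norm_num : (5:R) ≠ 0) h5
  · ring

/-- Substituting `t := 2λ₁`. -/
private noncomputable def stmt12.phi (ℓ : ℕ) [Fact (Nat.Prime ℓ)] :
    MvPolynomial (Fin 3) ℤ_[ℓ] →ₐ[ℤ_[ℓ]] MvPolynomial (Fin 3) ℤ_[ℓ] :=
  aeval ![X 0, X 1, 2 * X 0]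

private lemma stmt12.dvd_sub_phi (p : R) :
    (X 2 - 2 * X 0 : R) ∣ p - stmt12.phi ℓ p := by
  induction p using MvPolynomial.induction_on with
  | C a => simp [stmt12.phi]
  | add p q hp hq =>
    have : p + q - stmt12.phi ℓ (p + q) = (p - stmt12.phi ℓ p) + (q - stmt12.phi ℓ q) := by
      rw [map_add]; ring
    rw [this]; exact dvd_add hp hq
  | mul_X p i hp =>
    have key : (X 2 - 2 * X 0 : R) ∣ X i - stmt12.phi ℓ (X i) := by
      fin_cases i <;> simp [stmt12.phi]
    have : p * X i - stmt12.phi ℓ (p * X i)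
        = (p - stmt12.phi ℓ p) * X i + stmt12.phi ℓ p * (X i - stmt12.phi ℓ (X i)) := by
      rw [map_mul]; ring
    rw [this]
    exact dvd_add (Dvd.dvd.mul_right hp _) (Dvd.dvd.mul_left key _)

end Aux

/-- Let ℓ be a prime and ℤ_[ℓ] the ℓ-adic integers.  In ℤ_[ℓ][λ₁, λ₂, t]
(with λ₁ = X 0, λ₂ = X 1, t = X 2), let Q be the quotient by (r₁, r₂, r₃).  Then the
kernel of multiplication by the image of t − 2λ₁ on Q is the ideal generated by the
images of 60(λ₁² − 4λ₂)(t − 3λ₁) and 5λ₁λ₂(12t − 48λ₁) − (6λ₁² − 12λ₂)(t² − λ₁t − 44λ₂). -/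
theorem stmt12 (ℓ : ℕ) [Fact (Nat.Prime ℓ)]
    (r1 r2 r3 g1 g2 : MvPolynomial (Fin 3) ℤ_[ℓ])
    (hr1 : r1 = 20 * X 0 * X 1 + ((X 2) ^ 2 - X 0 * X 2 - 44 * X 1) * (X 2 - 2 * X 0))
    (hr2 : r2 = 24 * (X 0) ^ 2 - 48 * X 1 + (12 * X 2 - 48 * X 0) * (X 2 - 2 * X 0))
    (hr3 : r3 = 60 * ((X 0) ^ 2 - 4 * X 1) * (X 2 - 3 * X 0) * (X 2 - 2 * X 0))
    (hg1 : g1 = 60 * ((X 0) ^ 2 - 4 * X 1) * (X 2 - 3 * X 0))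
    (hg2 : g2 = 5 * X 0 * X 1 * (12 * X 2 - 48 * X 0) -
      (6 * (X 0) ^ 2 - 12 * X 1) * ((X 2) ^ 2 - X 0 * X 2 - 44 * X 1)) :
    ∀ q : MvPolynomial (Fin 3) ℤ_[ℓ] ⧸ Ideal.span {r1, r2, r3},
      Ideal.Quotient.mk (Ideal.span {r1, r2, r3}) (X 2 - 2 * X 0) * q = 0 ↔
        q ∈ Ideal.span {Ideal.Quotient.mk (Ideal.span {r1, r2, r3}) g1,
          Ideal.Quotient.mk (Ideal.span {r1, r2, r3}) g2} := by
  intro q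
  obtain ⟨p, rfl⟩ := Ideal.Quotient.mk_surjective q
  set I : Ideal (MvPolynomial (Fin 3) ℤ_[ℓ]) := Ideal.span {r1, r2, r3} with hI
  have hune : (X 2 - 2 * X 0 : MvPolynomial (Fin 3) ℤ_[ℓ]) ≠ 0 := by
    intro h
    have := congrArg (eval (![0,0,1] : Fin 3 → ℤ_[ℓ])) h
    simp at this
  constructor
  · intro h0
    rw [← map_mul, Ideal.Quotient.eq_zero_iff_mem] at h0
    -- decompose the membership into an explicit combination
    obtain ⟨a, z, hz, hzeq⟩ := Submodule.mem_span_insert.mp h0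
    obtain ⟨b, c, hbc⟩ := Ideal.mem_span_pair.mp hz
    rw [← hbc, smul_eq_mul] at hzeq
    -- key equation
    have hkey : 20 * X 0 * X 1 * (stmt12.phi ℓ a) + 24 * (X 0 ^ 2 - 2 * X 1) * (stmt12.phi ℓ b)
        = 0 := by
      have hk0 : (X 2 - 2 * X 0) * (p - ((X 2) ^ 2 - X 0 * X 2 - 44 * X 1) * a
            - (12 * X 2 - 48 * X 0) * b - (60 * ((X 0) ^ 2 - 4 * X 1) * (X 2 - 3 * X 0)) * c)
          = 20 * X 0 * X 1 * a + 24 * (X 0 ^ 2 - 2 * X 1) * b := by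
        subst hr1 hr2 hr3
        linear_combination hzeq
      have := congrArg (stmt12.phi ℓ) hk0
      simp only [map_mul, map_sub, map_add, map_pow, map_ofNat] at this
      rw [show stmt12.phi ℓ (X 2) = 2 * X 0 by simp [stmt12.phi],
        show stmt12.phi ℓ (X 0) = X 0 by simp [stmt12.phi],
        show stmt12.phi ℓ (X 1) = X 1 by simp [stmt12.phi]] at this
      linear_combination -this
    obtain ⟨h, hA, hB⟩ := stmt12.syz _ _ hkey
    obtain ⟨a2, ha2⟩ := stmt12.dvd_sub_phi (ℓ := ℓ) a
    obtain ⟨b2, hb2⟩ := stmt12.dvd_sub_phi (ℓ := ℓ) b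
    have hfin : (X 2 - 2 * X 0) * p = (X 2 - 2 * X 0) * (c * g1 - h * g2 + a2 * r1 + b2 * r2) := by
      subst hr1 hr2 hr3 hg1 hg2
      linear_combination hzeq + (20 * X 0 * X 1 + ((X 2) ^ 2 - X 0 * X 2 - 44 * X 1)
          * (X 2 - 2 * X 0)) * ha2
        + (24 * (X 0) ^ 2 - 48 * X 1 + (12 * X 2 - 48 * X 0) * (X 2 - 2 * X 0)) * hb2
        + (20 * X 0 * X 1 + ((X 2) ^ 2 - X 0 * X 2 - 44 * X 1) * (X 2 - 2 * X 0)) * hA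
        + (24 * (X 0) ^ 2 - 48 * X 1 + (12 * X 2 - 48 * X 0) * (X 2 - 2 * X 0)) * hB
    have hp : p = c * g1 - h * g2 + a2 * r1 + b2 * r2 := mul_left_cancel₀ hune hfin
    have hmk : Ideal.Quotient.mk I p = Ideal.Quotient.mk I (c * g1 - h * g2) := by
      rw [Ideal.Quotient.eq]
      rw [hp]
      have : c * g1 - h * g2 + a2 * r1 + b2 * r2 - (c * g1 - h * g2) = a2 * r1 + b2 * r2 := by
        ring
      rw [this]
      exact Ideal.add_mem _
        (Ideal.mul_mem_left _ _ (Ideal.subset_span (by simp)))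
        (Ideal.mul_mem_left _ _ (Ideal.subset_span (by simp)))
    rw [hmk, Ideal.mem_span_pair]
    exact ⟨Ideal.Quotient.mk I c, -(Ideal.Quotient.mk I h), by rw [map_sub, map_mul, map_mul]; ring⟩
  · intro hmem
    rw [Ideal.mem_span_pair] at hmem
    obtain ⟨x, y, hxy⟩ := hmem
    obtain ⟨x', rfl⟩ := Ideal.Quotient.mk_surjective x
    obtain ⟨y', rfl⟩ := Ideal.Quotient.mk_surjective y
    have hE : (X 2 - 2 * X 0) * (x' * g1 + y' * g2)
        = x' * r3 + (y' * (5 * X 0 * X 1)) * r2 + (-(y' * (6 * (X 0) ^ 2 - 12 * X 1))) * r1 := by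
      subst hr1 hr2 hr3 hg1 hg2
      ring
    have hEmem : (X 2 - 2 * X 0) * (x' * g1 + y' * g2) ∈ I := by
      rw [hE]
      exact Ideal.add_mem _
        (Ideal.add_mem _
          (Ideal.mul_mem_left _ _ (Ideal.subset_span (by simp)))
          (Ideal.mul_mem_left _ _ (Ideal.subset_span (by simp))))
        (Ideal.mul_mem_left _ _ (Ideal.subset_span (by simp)))
    calc Ideal.Quotient.mk I (X 2 - 2 * X 0) * Ideal.Quotient.mk I p
        = Ideal.Quotient.mk I (X 2 - 2 * X 0)
          * (Ideal.Quotient.mk I x' * Ideal.Quotient.mk I g1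
            + Ideal.Quotient.mk I y' * Ideal.Quotient.mk I g2) := by rw [hxy]
      _ = Ideal.Quotient.mk I ((X 2 - 2 * X 0) * (x' * g1 + y' * g2)) := by
          simp only [map_mul, map_add]
      _ = 0 := Ideal.Quotient.eq_zero_iff_mem.mpr hEmem
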